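/- Let Γ, α₀, α₁ ∈ [0,1] and let (A, X₁, X₂, S, Y, Z) be {0,1}-valued random variables with joint distribution specified by: P(A=1) = Γ; X₁ is uniform on {0,1} and independent of A; conditionally on (A, X₁), X₂ = X₁ with probability α_A and X₂ = 1 - X₁ with probability 1 - α_A; S is uniform on {0,1} and independent of (A, X₁, X₂); Y = X₁ if S = 0 and Y = X₂ if S = 1; and Z = X₁ if A = 1, Z = 0 if A = 0. Then I(X₁; Y | X₂, Z, A) = (1 - Γ)·(H_b((1+α₀)/2) + α₀ - 1), where H_b(p) = -p·log₂ p - (1-p)·log₂(1-p) and all information quantities are computed in bits (logarithm base 2). -/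
import Mathlib


open Finset

/-- Probability that `X` takes the value `b`, under the pmf `p` on the finite sample
space `Ω`. -/
noncomputable def prob {Ω β : Type*} [Fintype Ω] (p : Ω → ℝ) (X : Ω → β) (b : β) : ℝ :=
  haveI := Classical.propDecidable
  ∑ ω, if X ω = b then p ω else 0

/-- Shannon entropy `H(X)` in bits (logarithm base 2). -/
noncomputable def ent2 {Ω β : Type*} [Fintype Ω] [Fintype β] (p : Ω → ℝ) (X : Ω → β) : ℝ :=
  -∑ b, prob p X b * Real.logb 2 (prob p X b)

/-- Conditional entropy `H(X|Y) = H(X,Y) - H(Y)` in bits. -/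
noncomputable def condEnt2 {Ω β γ : Type*} [Fintype Ω] [Fintype β] [Fintype γ]
    (p : Ω → ℝ) (X : Ω → β) (Y : Ω → γ) : ℝ :=
  ent2 p (fun ω => (X ω, Y ω)) - ent2 p Y

/-- Mutual information `I(X;Y) = H(X) + H(Y) - H(X,Y)` in bits. -/
noncomputable def mutInf2 {Ω β γ : Type*} [Fintype Ω] [Fintype β] [Fintype γ]
    (p : Ω → ℝ) (X : Ω → β) (Y : Ω → γ) : ℝ :=
  ent2 p X + ent2 p Y - ent2 p (fun ω => (X ω, Y ω))

/-- Conditional mutual information `I(X;Y|Z) = H(X|Z) + H(Y|Z) - H(X,Y|Z)` in bits. -/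
noncomputable def condMutInf2 {Ω β γ δ : Type*} [Fintype Ω] [Fintype β] [Fintype γ] [Fintype δ]
    (p : Ω → ℝ) (X : Ω → β) (Y : Ω → γ) (Z : Ω → δ) : ℝ :=
  condEnt2 p X Z + condEnt2 p Y Z - condEnt2 p (fun ω => (X ω, Y ω)) Z

/-- The joint pmf of `(A, X₁, X₂, S)` in the deterministic relay-with-actions example:
`P(A=1) = Γ`; `X₁` is uniform on `{0,1}` and independent of `A`; given `(A, X₁)`,
`X₂ = X₁` with probability `α_A` (`α₁` if `A = 1`, `α₀` if `A = 0`) and `X₂ = 1 - X₁`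
otherwise; `S` is uniform on `{0,1}` and independent of `(A, X₁, X₂)`.
A sample point is `ω = (a, x₁, x₂, s)` with `true` playing the role of `1`. -/
noncomputable def relayP (Γ α₀ α₁ : ℝ) : Bool × Bool × Bool × Bool → ℝ :=
  fun ω =>
    (if ω.1 then Γ else 1 - Γ) * (1 / 2) *
      (if ω.2.2.1 = ω.2.1 then (if ω.1 then α₁ else α₀) else 1 - (if ω.1 then α₁ else α₀)) *
      (1 / 2)

/-- The action `A`. -/
def act (ω : Bool × Bool × Bool × Bool) : Bool := ω.1

/-- The input `X₁` of Encoder 1. -/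
def inp1 (ω : Bool × Bool × Bool × Bool) : Bool := ω.2.1

/-- The input `X₂` of Encoder 2 (the relay). -/
def inp2 (ω : Bool × Bool × Bool × Bool) : Bool := ω.2.2.1

/-- The channel output `Y`: equal to `X₁` if the switch `S = 0` and to `X₂` if `S = 1`. -/
def outY (ω : Bool × Bool × Bool × Bool) : Bool := if ω.2.2.2 then ω.2.2.1 else ω.2.1

/-- The cribbed signal `Z`: equal to `X₁` if `A = 1` and constant (`0`) if `A = 0`. -/
def cribZ (ω : Bool × Bool × Bool × Bool) : Bool := if ω.1 then ω.2.1 else false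

/-- The binary entropy function in base 2, `H_b(p) = -p·log₂ p - (1-p)·log₂(1-p)`,
with the convention `0·log₂ 0 = 0`. -/
noncomputable def binEnt (p : ℝ) : ℝ := -p * Real.logb 2 p - (1 - p) * Real.logb 2 (1 - p)

/-- In the deterministic relay-with-actions example,
`I(X₁; Y | X₂, Z, A) = (1 - Γ)·(H_b((1+α₀)/2) + α₀ - 1)` (in bits). -/
theorem relay_condMutInf (Γ α₀ α₁ : ℝ)
    (hΓ : Γ ∈ Set.Icc (0 : ℝ) 1) (hα₀ : α₀ ∈ Set.Icc (0 : ℝ) 1)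
    (hα₁ : α₁ ∈ Set.Icc (0 : ℝ) 1) :
    condMutInf2 (relayP Γ α₀ α₁) inp1 outY (fun ω => (inp2 ω, cribZ ω, act ω))
      = (1 - Γ) * (binEnt ((1 + α₀) / 2) + α₀ - 1) := by
  have hred : condMutInf2 (relayP Γ α₀ α₁) inp1 outY (fun ω => (inp2 ω, cribZ ω, act ω))
      = (1 - Γ) * (-(1-α₀) * Real.logb 2 ((1-Γ)*(1-α₀)/2)
          - ((1+α₀)/2) * Real.logb 2 ((1-Γ)*(1+α₀)/4)
          + ((1-α₀)/2) * Real.logb 2 ((1-Γ)*(1-α₀)/4)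
          + Real.logb 2 ((1-Γ)/2)) := by
    simp only [condMutInf2, condEnt2, ent2, prob, relayP, act, inp1, inp2, outY, cribZ,
      Fintype.sum_prod_type, Fintype.sum_bool]
    norm_num
    ring_nf
  rw [hred]
  obtain ⟨h0Γ, h1Γ⟩ := hΓ
  obtain ⟨h0a, h1a⟩ := hα₀
  rcases eq_or_lt_of_le h1Γ with hΓ1 | hΓ1
  · rw [← hΓ1]; ring
  rcases eq_or_lt_of_le h1a with ha1 | ha1
  · subst ha1
    norm_num [binEnt]
    rw [show (1-Γ)*2/4 = (1-Γ)/2 by ring]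
    ring_nf
    exact Or.inr trivial
  have hg : (0:ℝ) < 1 - Γ := by linarith
  have hb : (0:ℝ) < 1 - α₀ := by linarith
  have hc : (0:ℝ) < 1 + α₀ := by linarith
  have h2 : Real.logb 2 2 = 1 := by simp
  have h4 : Real.logb 2 4 = 2 := by
    rw [show (4:ℝ) = 2^(2:ℕ) by norm_num, Real.logb_pow]; simp
  have e1 : Real.logb 2 ((1-Γ)*(1-α₀)/2)
      = Real.logb 2 (1-Γ) + Real.logb 2 (1-α₀) - 1 := by
    rw [Real.logb_div (by positivity) two_ne_zero, Real.logb_mul hg.ne' hb.ne', h2]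
  have e2 : Real.logb 2 ((1-Γ)*(1+α₀)/4)
      = Real.logb 2 (1-Γ) + Real.logb 2 (1+α₀) - 2 := by
    rw [Real.logb_div (by positivity) (by norm_num), Real.logb_mul hg.ne' hc.ne', h4]
  have e3 : Real.logb 2 ((1-Γ)*(1-α₀)/4)
      = Real.logb 2 (1-Γ) + Real.logb 2 (1-α₀) - 2 := by
    rw [Real.logb_div (by positivity) (by norm_num), Real.logb_mul hg.ne' hb.ne', h4]
  have e4 : Real.logb 2 ((1-Γ)/2) = Real.logb 2 (1-Γ) - 1 := by
    rw [Real.logb_div hg.ne' two_ne_zero, h2]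
  have e5 : Real.logb 2 ((1+α₀)/2) = Real.logb 2 (1+α₀) - 1 := by
    rw [Real.logb_div hc.ne' two_ne_zero, h2]
  have e6 : Real.logb 2 (1 - (1+α₀)/2) = Real.logb 2 (1-α₀) - 1 := by
    rw [show 1 - (1+α₀)/2 = (1-α₀)/2 by ring, Real.logb_div hb.ne' two_ne_zero, h2]
  rw [binEnt, e1, e2, e3, e4, e5, e6]
  ring
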